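/- Let G be a connected graph on n₀ vertices with a triangle-factor and exactly (4/3)·n₀ − 1 edges. Then every vertex of G lies in exactly one triangle of G. -/

import Mathlib

open SimpleGraph Finset

lemma reach_del {W : Type*} (H : SimpleGraph W) (v w : W)
    (hr : (H \ fromEdgeSet {s(v,w)}).Reachable v w) {a b : W} (p : H.Walk a b) :
    (H \ fromEdgeSet {s(v,w)}).Reachable a b := by
  induction p with
  | nil => exact Reachable.refl _
  | @cons a c b h q ih =>
    refine Reachable.trans ?_ ih
    by_cases he : s(a, c) = s(v, w)
    · rcases Sym2.eq_iff.mp he with ⟨rfl, rfl⟩ | ⟨rfl, rfl⟩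
      · exact hr
      · exact hr.symm
    · exact Adj.reachable (by simp [sdiff_adj, fromEdgeSet_adj, h, he])

lemma conn_le {W : Type*} [Fintype W] [DecidableEq W] :
    ∀ (m : ℕ) (H : SimpleGraph W) [Fintype H.edgeSet],
      H.edgeFinset.card ≤ m → H.Connected → Fintype.card W ≤ H.edgeFinset.card + 1 := by
  intro m
  induction m with
  | zero =>
    intro H _ hm hc
    by_cases ha : H.IsAcyclic
    · exact le_of_eq (IsTree.card_edgeFinset ⟨hc, ha⟩).symm
    · exfalso
      rw [IsAcyclic] at ha
      push_neg at ha
      obtain ⟨u, p, hp⟩ := ha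
      have h3 := hp.three_le_length
      have : p.edges ≠ [] := by
        intro h
        have := p.length_edges
        rw [h] at this
        simp at this
        omega
      obtain ⟨e, he⟩ := List.exists_mem_of_ne_nil _ this
      have : e ∈ H.edgeFinset := mem_edgeFinset.mpr (p.edges_subset_edgeSet he)
      have := Finset.card_pos.mpr ⟨e, this⟩
      omega
  | succ m ih =>
    intro H _ hm hc
    by_cases ha : H.IsAcyclic
    · exact le_of_eq (IsTree.card_edgeFinset ⟨hc, ha⟩).symm
    · rw [IsAcyclic] at ha
      push_neg at ha
      obtain ⟨u, p, hp⟩ := ha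
      have h3 := hp.three_le_length
      have hne : p.edges ≠ [] := by
        intro h
        have := p.length_edges
        rw [h] at this
        simp at this
        omega
      obtain ⟨e, he⟩ := List.exists_mem_of_ne_nil _ hne
      induction e with
      | h v w =>
      have heS : s(v,w) ∈ H.edgeSet := p.edges_subset_edgeSet he
      have hvw : H.Adj v w ∧ (H \ fromEdgeSet {s(v,w)}).Reachable v w :=
        adj_and_reachable_delete_edges_iff_exists_cycle.mpr ⟨u, p, hp, he⟩
      set H' := H \ fromEdgeSet {s(v,w)} with hH'
      classical
      haveI : Fintype H'.edgeSet := Set.Finite.fintype (Set.toFinite _)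
      have hE' : H'.edgeFinset = H.edgeFinset.erase s(v,w) := by
        ext f
        simp only [hH', mem_edgeFinset, Finset.mem_erase, edgeSet_sdiff, edgeSet_fromEdgeSet,
          edgeSet_sdiff_sdiff_isDiag, Set.mem_diff, Set.mem_singleton_iff]
        tauto
      have hc' : H'.Connected := by
        rw [connected_iff]
        refine ⟨fun a b => ?_, hc.nonempty⟩
        obtain ⟨q⟩ := hc a b
        exact reach_del H v w hvw.2 q
      have hcard : H'.edgeFinset.card = H.edgeFinset.card - 1 := by
        rw [hE', Finset.card_erase_of_mem (mem_edgeFinset.mpr heS)]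
      have h1 : 1 ≤ H.edgeFinset.card := Finset.card_pos.mpr ⟨s(v,w), mem_edgeFinset.mpr heS⟩
      have := ih H' (by omega) hc'
      omega

lemma acyclic_no_triangle {W : Type*} (H : SimpleGraph W) (ha : H.IsAcyclic) {x y z : W}
    (hxy : H.Adj x y) (hyz : H.Adj y z) (hzx : H.Adj z x) : False := by
  classical
  have hxz : x ≠ z := fun h => (h ▸ hzx).ne rfl
  refine ha (.cons hxy (.cons hyz (.cons hzx .nil))) ?_
  simp [Walk.isCycle_def, Walk.isTrail_def, Sym2.eq_iff, hxy.ne, hyz.ne, hzx.ne, hxz,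
    Ne.symm hxz, hxy.ne', hyz.ne', hzx.ne']

lemma conn_acyclic {W : Type*} [Fintype W] [DecidableEq W] (H : SimpleGraph W) [Fintype H.edgeSet]
    (hc : H.Connected) (hcard : Fintype.card W = H.edgeFinset.card + 1) : H.IsAcyclic := by
  by_contra ha
  rw [SimpleGraph.IsAcyclic] at ha
  push_neg at ha
  obtain ⟨u, p, hp⟩ := ha
  have h3 := hp.three_le_length
  have hne : p.edges ≠ [] := by
    intro h
    have := p.length_edges
    rw [h] at this
    simp at this
    omega
  obtain ⟨e, he⟩ := List.exists_mem_of_ne_nil _ hne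
  induction e with
  | h v w =>
  have heS : s(v,w) ∈ H.edgeSet := p.edges_subset_edgeSet he
  have hvw : H.Adj v w ∧ (H \ fromEdgeSet {s(v,w)}).Reachable v w :=
    adj_and_reachable_delete_edges_iff_exists_cycle.mpr ⟨u, p, hp, he⟩
  set H' := H \ fromEdgeSet {s(v,w)} with hH'
  classical
  haveI : Fintype H'.edgeSet := Set.Finite.fintype (Set.toFinite _)
  have hE' : H'.edgeFinset = H.edgeFinset.erase s(v,w) := by
    ext f
    simp only [hH', mem_edgeFinset, Finset.mem_erase, edgeSet_sdiff, edgeSet_fromEdgeSet,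
      edgeSet_sdiff_sdiff_isDiag, Set.mem_diff, Set.mem_singleton_iff]
    tauto
  have hc' : H'.Connected := by
    rw [connected_iff]
    refine ⟨fun a b => ?_, hc.nonempty⟩
    obtain ⟨q⟩ := hc a b
    exact reach_del H v w hvw.2 q
  have hcard' : H'.edgeFinset.card = H.edgeFinset.card - 1 := by
    rw [hE', Finset.card_erase_of_mem (mem_edgeFinset.mpr heS)]
  have h1 : 1 ≤ H.edgeFinset.card := Finset.card_pos.mpr ⟨s(v,w), mem_edgeFinset.mpr heS⟩
  have := conn_le H'.edgeFinset.card H' le_rfl hc'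
  omega

lemma clique_edges_card {V : Type*} [DecidableEq V] [Fintype V] (G : SimpleGraph V)
    [DecidableRel G.Adj] (t : Finset V) (h : G.IsNClique 3 t) :
    (G.edgeFinset.filter (fun e => ∀ x ∈ e, x ∈ t)).card = 3 := by
  classical
  obtain ⟨a, b, c, hab, hac, hbc, rfl⟩ := Finset.card_eq_three.mp h.2
  have hcl := h.1
  have hAab : G.Adj a b := hcl (by simp) (by simp) hab
  have hAac : G.Adj a c := hcl (by simp) (by simp) hac
  have hAbc : G.Adj b c := hcl (by simp) (by simp) hbc
  have : (G.edgeFinset.filter (fun e => ∀ x ∈ e, x ∈ ({a,b,c} : Finset V)))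
      = {s(a,b), s(a,c), s(b,c)} := by
    ext e
    induction e with
    | _ x y =>
      simp only [Finset.mem_filter, mem_edgeFinset, mem_edgeSet, Sym2.ball,
        Finset.mem_insert, Finset.mem_singleton, Sym2.eq_iff]
      constructor
      · rintro ⟨hadj, (rfl|rfl|rfl), (rfl|rfl|rfl)⟩ <;> simp_all <;> tauto
      · rintro ((⟨rfl,rfl⟩|⟨rfl,rfl⟩)|(⟨rfl,rfl⟩|⟨rfl,rfl⟩)|(⟨rfl,rfl⟩|⟨rfl,rfl⟩)) <;>
          simp_all [adj_comm]
  rw [this]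
  rw [Finset.card_insert_of_notMem (by simp [Sym2.eq_iff]; tauto),
    Finset.card_insert_of_notMem (by simp [Sym2.eq_iff]; tauto), Finset.card_singleton]


def IsTriangleFactor {V : Type*} [DecidableEq V] (G : SimpleGraph V) (P : Finset (Finset V)) : Prop :=
  (∀ t ∈ P, G.IsNClique 3 t) ∧ (∀ v : V, ∃! t, t ∈ P ∧ v ∈ t)

theorem stmt11 {V : Type*} [Fintype V] [DecidableEq V] (G : SimpleGraph V) [DecidableRel G.Adj]
    (n₀ : ℕ) (hn : Fintype.card V = n₀) (hconn : G.Connected)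
    (P : Finset (Finset V)) (hP : IsTriangleFactor G P)
    (hE : 3 * G.edgeFinset.card + 3 = 4 * n₀) :
    ∀ v : V, ∃! t : Finset V, G.IsNClique 3 t ∧ v ∈ t := by
  classical
  obtain ⟨hPc, hPu⟩ := hP
  choose tri htriP htriMem using fun v : V => (hPu v).exists
  have htriU : ∀ (v : V) (t : Finset V), t ∈ P → v ∈ t → t = tri v :=
    fun v t ht hv => (hPu v).unique ⟨ht, hv⟩ ⟨htriP v, htriMem v⟩
  -- card V = 3 * P.card
  have hbU : (univ : Finset V) = P.biUnion id := by
    ext v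
    simp only [Finset.mem_biUnion, id, Finset.mem_univ, true_iff]
    exact ⟨tri v, htriP v, htriMem v⟩
  have hdisj : ∀ t₁ ∈ P, ∀ t₂ ∈ P, t₁ ≠ t₂ → Disjoint (id t₁) (id t₂) := by
    intro t₁ h₁ t₂ h₂ hne
    rw [Finset.disjoint_left]
    intro x hx₁ hx₂
    exact hne ((htriU x t₁ h₁ hx₁).trans (htriU x t₂ h₂ hx₂).symm)
  have hVP : Fintype.card V = 3 * P.card := by
    rw [← Finset.card_univ, hbU, Finset.card_biUnion hdisj]
    simp only [id]
    rw [Finset.sum_congr rfl (fun t ht => (hPc t ht).2), Finset.sum_const, smul_eq_mul,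
      Nat.mul_comm]
  have hPpos : 0 < P.card := by
    have := hconn.nonempty
    obtain ⟨v⟩ := this
    exact Finset.card_pos.mpr ⟨tri v, htriP v⟩
  have hEcard : G.edgeFinset.card + 1 = 4 * P.card := by omega
  -- inside / cross edges
  have hinmem : ∀ (x y : V), G.Adj x y → ((∀ z ∈ s(x,y), z ∈ tri x) ↔ tri x = tri y) := by
    intro x y hxy
    rw [Sym2.ball]
    constructor
    · rintro ⟨-, hy⟩
      exact (htriU y (tri x) (htriP x) hy).symm ▸ rfl
    · intro h
      exact ⟨htriMem x, h ▸ htriMem y⟩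
  set isIn : Sym2 V → Prop := fun e => (e.map tri).IsDiag with hisIn
  have hisIn' : ∀ (x y : V), isIn s(x,y) ↔ tri x = tri y := by
    intro x y
    simp [hisIn, Sym2.map_pair_eq, Sym2.mk_isDiag_iff]
  set inE := G.edgeFinset.filter isIn with hinE'
  set crossE := G.edgeFinset.filter (fun e => ¬ isIn e) with hcrossE'
  have hsplit : inE.card + crossE.card = G.edgeFinset.card :=
    Finset.card_filter_add_card_filter_not (fun e => isIn e)
  -- inE as biUnion
  have hinEb : inE = P.biUnion (fun t => G.edgeFinset.filter (fun e => ∀ x ∈ e, x ∈ t)) := by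
    ext e
    induction e with
    | _ x y =>
      simp only [hinE', Finset.mem_filter, Finset.mem_biUnion]
      constructor
      · rintro ⟨he, hin⟩
        have hxy : G.Adj x y := mem_edgeFinset.mp he
        rw [hisIn' x y] at hin
        refine ⟨tri x, htriP x, he, ?_⟩
        rw [Sym2.ball]
        exact ⟨htriMem x, hin ▸ htriMem y⟩
      · rintro ⟨t, ht, he, hin⟩
        have hxy : G.Adj x y := mem_edgeFinset.mp he
        rw [Sym2.ball] at hin
        refine ⟨he, (hisIn' x y).mpr ?_⟩
        rw [← htriU x t ht hin.1, ← htriU y t ht hin.2]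
  have hinEcard : inE.card = 3 * P.card := by
    rw [hinEb, Finset.card_biUnion]
    · rw [Finset.sum_congr rfl (fun t ht => clique_edges_card G t (hPc t ht)),
        Finset.sum_const, smul_eq_mul, Nat.mul_comm]
    · intro t₁ h₁ t₂ h₂ hne
      rw [Function.onFun, Finset.disjoint_left]
      intro e he₁ he₂
      simp only [Finset.mem_filter] at he₁ he₂
      induction e with
      | _ x y =>
        have hxy : G.Adj x y := mem_edgeFinset.mp he₁.1
        rw [Sym2.ball] at he₁ he₂
        exact hne ((htriU x t₁ h₁ he₁.2.1).trans (htriU x t₂ h₂ he₂.2.1).symm)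
  have hcrosscard : crossE.card + 1 = P.card := by omega
  -- quotient graph on triangles
  set H : SimpleGraph {t // t ∈ P} :=
    { Adj := fun s s' => s ≠ s' ∧ ∃ a ∈ s.1, ∃ b ∈ s'.1, G.Adj a b
      symm := by
        constructor
        rintro s s' ⟨hne, a, ha, b, hb, hab⟩
        exact ⟨hne.symm, b, hb, a, ha, hab.symm⟩
      loopless := ⟨fun s h => h.1 rfl⟩ } with hH
  haveI : Fintype H.edgeSet := Set.Finite.fintype (Set.toFinite _)
  set triQ : V → {t // t ∈ P} := fun v => ⟨tri v, htriP v⟩ with htriQ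
  -- H is connected
  have hwalk : ∀ (u v : V), G.Walk u v → H.Reachable (triQ u) (triQ v) := by
    intro u v p
    induction p with
    | nil => exact Reachable.refl _
    | @cons a c b h q ih =>
      refine Reachable.trans ?_ ih
      by_cases hac : triQ a = triQ c
      · rw [hac]
      · exact Adj.reachable ⟨hac, a, htriMem a, c, htriMem c, h⟩
  have hHconn : H.Connected := by
    rw [connected_iff]
    refine ⟨fun s s' => ?_, ?_⟩
    · obtain ⟨a, ha⟩ : ∃ a, a ∈ s.1 := Finset.card_pos.mp (by rw [(hPc s.1 s.2).2]; norm_num)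
      obtain ⟨b, hb⟩ : ∃ b, b ∈ s'.1 := Finset.card_pos.mp (by rw [(hPc s'.1 s'.2).2]; norm_num)
      have h1 : triQ a = s := Subtype.ext (htriU a s.1 s.2 ha).symm
      have h2 : triQ b = s' := Subtype.ext (htriU b s'.1 s'.2 hb).symm
      rw [← h1, ← h2]
      obtain ⟨q⟩ := hconn a b
      exact hwalk a b q
    · obtain ⟨t, ht⟩ := Finset.card_pos.mp hPpos
      exact ⟨⟨t, ht⟩⟩
  -- the map from cross edges to H-edges
  set F : Sym2 V → Sym2 {t // t ∈ P} := Sym2.map triQ with hF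
  have hmaps : ∀ e ∈ crossE, F e ∈ H.edgeFinset := by
    intro e he
    induction e with
    | _ x y =>
      simp only [hcrossE', Finset.mem_filter] at he
      have hxy : G.Adj x y := mem_edgeFinset.mp he.1
      have hne : tri x ≠ tri y := fun h => he.2 ((hisIn' x y).mpr h)
      rw [mem_edgeFinset]
      exact ⟨fun h => hne (Subtype.ext_iff.mp h), x, htriMem x, y, htriMem y, hxy⟩
  have hsurj : ∀ f ∈ H.edgeFinset, ∃ e ∈ crossE, F e = f := by
    intro f hf
    induction f with
    | _ s s' =>
      obtain ⟨hne, a, ha, b, hb, hab⟩ := mem_edgeFinset.mp hf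
      have h1 : triQ a = s := Subtype.ext (htriU a s.1 s.2 ha).symm
      have h2 : triQ b = s' := Subtype.ext (htriU b s'.1 s'.2 hb).symm
      refine ⟨s(a,b), ?_, ?_⟩
      · simp only [hcrossE', Finset.mem_filter, mem_edgeFinset]
        refine ⟨hab, fun h => ?_⟩
        rw [hisIn' a b] at h
        exact hne (by rw [← h1, ← h2]; exact Subtype.ext h)
      · rw [hF, Sym2.map_pair_eq, h1, h2]
  -- edge count of H
  have hHle : H.edgeFinset.card ≤ crossE.card :=
    Finset.card_le_card_of_surjOn F (fun f hf => by
      obtain ⟨e, he, hfe⟩ := hsurj f hf; exact ⟨e, he, hfe⟩)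
  have hcardP : Fintype.card {t // t ∈ P} = P.card := Fintype.card_coe P
  have hHge : Fintype.card {t // t ∈ P} ≤ H.edgeFinset.card + 1 :=
    conn_le H.edgeFinset.card H le_rfl hHconn
  have hHcard : H.edgeFinset.card + 1 = P.card := by omega
  have hacyc : H.IsAcyclic := conn_acyclic H hHconn (by omega)
  have himg : crossE.image F = H.edgeFinset := by
    refine Finset.Subset.antisymm (Finset.image_subset_iff.mpr hmaps) (fun f hf => ?_)
    obtain ⟨e, he, hfe⟩ := hsurj f hf
    exact Finset.mem_image.mpr ⟨e, he, hfe⟩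
  have hinj : Set.InjOn F crossE := by
    refine Finset.injOn_of_card_image_eq ?_
    rw [himg]
    omega
  -- key: two cross edges between the same pair of triangles are impossible
  have key2 : ∀ x y z : V, G.Adj x y → G.Adj x z → G.Adj y z → tri x = tri y →
      tri x ≠ tri z → False := by
    intro x y z hxy hxz hyz hexy hnexz
    have he1 : s(x,z) ∈ crossE := by
      simp only [hcrossE', Finset.mem_filter, mem_edgeFinset]
      exact ⟨hxz, fun h => hnexz ((hisIn' x z).mp h)⟩
    have he2 : s(y,z) ∈ crossE := by
      simp only [hcrossE', Finset.mem_filter, mem_edgeFinset]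
      exact ⟨hyz, fun h => hnexz (hexy.trans ((hisIn' y z).mp h))⟩
    have hFeq : F s(x,z) = F s(y,z) := by
      have hQ : triQ x = triQ y := Subtype.ext hexy
      rw [hF, Sym2.map_pair_eq, Sym2.map_pair_eq, hQ]
    have := hinj he1 he2 hFeq
    rcases Sym2.eq_iff.mp this with ⟨h1, -⟩ | ⟨h1, h2⟩
    · exact hxy.ne h1
    · exact hxz.ne h1
  -- every 3-clique of G belongs to P
  have hcliqueP : ∀ t : Finset V, G.IsNClique 3 t → t ∈ P := by
    intro t ht3
    obtain ⟨a, b, c, hab, hac, hbc, rfl⟩ := Finset.card_eq_three.mp ht3.2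
    have hcl := ht3.1
    have hAab : G.Adj a b := hcl (by simp) (by simp) hab
    have hAac : G.Adj a c := hcl (by simp) (by simp) hac
    have hAbc : G.Adj b c := hcl (by simp) (by simp) hbc
    by_cases h1 : tri a = tri b
    · by_cases h2 : tri a = tri c
      · -- all in the same triangle of P
        have hsub : ({a,b,c} : Finset V) ⊆ tri a := by
          intro x hx
          simp only [Finset.mem_insert, Finset.mem_singleton] at hx
          rcases hx with rfl | rfl | rfl
          · exact htriMem x
          · exact h1 ▸ htriMem x
          · exact h2 ▸ htriMem x
        have : ({a,b,c} : Finset V) = tri a := by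
          apply Finset.eq_of_subset_of_card_le hsub
          rw [(hPc (tri a) (htriP a)).2, ht3.2]
        rw [this]
        exact htriP a
      · exact absurd (key2 a b c hAab hAac hAbc h1 h2) (by simp)
    · by_cases h2 : tri a = tri c
      · exact absurd (key2 a c b hAac hAab hAbc.symm h2 h1) (by simp)
      · by_cases h3 : tri b = tri c
        · exact absurd (key2 b c a hAbc hAab.symm hAac.symm h3 (fun h => h1 h.symm)) (by simp)
        · -- three distinct triangles: a triangle in the tree H, contradiction
          have hab' : H.Adj (triQ a) (triQ b) :=
            ⟨fun h => h1 (Subtype.ext_iff.mp h), a, htriMem a, b, htriMem b, hAab⟩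
          have hbc' : H.Adj (triQ b) (triQ c) :=
            ⟨fun h => h3 (Subtype.ext_iff.mp h), b, htriMem b, c, htriMem c, hAbc⟩
          have hca' : H.Adj (triQ c) (triQ a) :=
            ⟨fun h => h2 (Subtype.ext_iff.mp h).symm, c, htriMem c, a, htriMem a, hAac.symm⟩
          exact absurd (acyclic_no_triangle H hacyc hab' hbc' hca') (by simp)
  intro v
  refine ⟨tri v, ⟨hPc (tri v) (htriP v), htriMem v⟩, ?_⟩
  rintro t ⟨ht3, hvt⟩
  exact htriU v t (hcliqueP t ht3) hvt
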